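/- Let L ≥ 1 be an integer and τ ∈ (0,1] a real number. Let X_1, …, X_L be independent random variables with values in [0,1] that are stochastically larger than Uniform[0,1], i.e., ℙ(X_k ≤ t) ≤ t for all t ∈ [0,1] and every k. Define the truncated product W = ∏_{k : X_k ≤ τ} X_k (an empty product equals 1). Then for every w with 0 < w ≤ 1, ℙ(W < w) ≤ Σ_{k=1}^{L} C(L,k)·(1 − τ)^{L−k} · ( 1{w ≤ τ^k} · w · Σ_{s=0}^{k−1} (k·ln τ − ln w)^s / s! + 1{w > τ^k} · τ^k ), where C(L,k) is the binomial coefficient. -/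

import Mathlib

open MeasureTheory ProbabilityTheory

noncomputable def Gz (τ : ℝ) (k : ℕ) (w : ℝ) : ℝ :=
  if w ≤ τ ^ k then w * ∑ s ∈ Finset.range k,
    ((k : ℝ) * Real.log τ - Real.log w) ^ s / (Nat.factorial s : ℝ)
  else τ ^ k

lemma Gz_meas (τ : ℝ) (k : ℕ) : Measurable (Gz τ k) := by
  unfold Gz
  exact Measurable.ite (measurableSet_le measurable_id measurable_const)
    (measurable_id.mul (Finset.measurable_sum _ (fun s _ =>
      ((measurable_const.sub Real.measurable_log).pow_const s).div_const _)))
    measurable_const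

lemma Gz_nonneg (τ : ℝ) (k : ℕ) {w : ℝ} (hτ0 : 0 < τ) (hw : 0 < w) : 0 ≤ Gz τ k w := by
  unfold Gz
  split
  · rename_i h
    have hu : 0 ≤ (k : ℝ) * Real.log τ - Real.log w := by
      have := Real.log_le_log hw h
      rwa [Real.log_pow, sub_nonneg] at *
    exact mul_nonneg hw.le (Finset.sum_nonneg fun s _ =>
      div_nonneg (pow_nonneg hu s) (Nat.cast_nonneg _))
  · positivity

lemma Gz_le_pow (τ : ℝ) (k : ℕ) {w : ℝ} (hτ0 : 0 < τ) (hw : 0 < w) : Gz τ k w ≤ τ ^ k := by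
  unfold Gz
  split
  · rename_i h
    have hu : 0 ≤ (k : ℝ) * Real.log τ - Real.log w := by
      have := Real.log_le_log hw h
      rwa [Real.log_pow, sub_nonneg] at *
    calc w * ∑ s ∈ Finset.range k, ((k : ℝ) * Real.log τ - Real.log w) ^ s / (Nat.factorial s : ℝ)
        ≤ w * Real.exp ((k : ℝ) * Real.log τ - Real.log w) :=
          mul_le_mul_of_nonneg_left (Real.sum_le_exp_of_nonneg hu k) hw.le
      _ = τ ^ k := by
          rw [Real.exp_sub, Real.exp_log hw, Real.exp_nat_mul, Real.exp_log hτ0]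
          field_simp
  · exact le_rfl

lemma Gz_comp_meas (τ : ℝ) (k : ℕ) (w : ℝ) :
    Measurable (fun x : ℝ => Gz τ k (w / x)) :=
  (Gz_meas τ k).comp (measurable_const.div measurable_id)

lemma Gz_intInt (τ : ℝ) (k : ℕ) {w : ℝ} (hτ0 : 0 < τ) (hw : 0 < w) :
    IntervalIntegrable (fun x : ℝ => Gz τ k (w / x)) volume 0 τ := by
  rw [intervalIntegrable_iff_integrableOn_Ioc_of_le hτ0.le]
  refine Measure.integrableOn_of_bounded (M := τ ^ k) (by simp)
    (Gz_comp_meas τ k w).aestronglyMeasurable ?_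
  filter_upwards [ae_restrict_mem measurableSet_Ioc] with x hx
  have hwx : 0 < w / x := div_pos hw hx.1
  rw [Real.norm_eq_abs, abs_of_nonneg (Gz_nonneg τ k hτ0 hwx)]
  exact Gz_le_pow τ k hτ0 hwx

lemma Gz_boundary (τ : ℝ) (m : ℕ) : Gz τ (m+1) (τ ^ (m+1)) = τ ^ (m+1) := by
  unfold Gz
  rw [if_pos le_rfl, Real.log_pow]
  have h0 : ((m+1 : ℕ) : ℝ) * Real.log τ - ((m+1 : ℕ) : ℝ) * Real.log τ = 0 := by ring
  rw [h0, Finset.sum_eq_single 0]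
  · simp
  · intro b _ hb; simp [zero_pow hb]
  · simp

lemma Gz_int (τ : ℝ) (hτ0 : 0 < τ) (m : ℕ) {w : ℝ} (hw : 0 < w) :
    ∫ x in (0:ℝ)..τ, Gz τ m (w / x) = Gz τ (m+1) w := by
  have hτm : 0 < τ ^ m := pow_pos hτ0 m
  have hae_ne : ∀ᵐ x : ℝ, x ∉ ({τ} : Set ℝ) :=
    measure_eq_zero_iff_ae_notMem.mp Real.volume_singleton
  by_cases hcase : τ ^ (m+1) ≤ w
  · have key : ∀ x ∈ Set.Ioo (0:ℝ) τ, Gz τ m (w / x) = τ ^ m := by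
      intro x hx
      have h2 : τ ^ m ≤ w / τ := (le_div_iff₀ hτ0).2 (by rw [← pow_succ]; exact hcase)
      have h1 : τ ^ m < w / x := lt_of_le_of_lt h2 (div_lt_div_of_pos_left hw hx.1 hx.2)
      rw [Gz, if_neg (not_le.2 h1)]
    have hconst : ∫ x in (0:ℝ)..τ, Gz τ m (w / x) = ∫ _x in (0:ℝ)..τ, (τ^m : ℝ) := by
      apply intervalIntegral.integral_congr_ae
      filter_upwards [hae_ne] with x hx hmem
      rw [Set.uIoc_of_le hτ0.le] at hmem
      exact key x ⟨hmem.1, lt_of_le_of_ne hmem.2 (by simpa using hx)⟩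
    rw [hconst, intervalIntegral.integral_const, smul_eq_mul, sub_zero]
    rcases eq_or_lt_of_le hcase with heq | hlt
    · rw [← heq, Gz_boundary, pow_succ]; ring
    · rw [Gz, if_neg (not_le.2 hlt), pow_succ]; ring
  · push_neg at hcase
    set c : ℝ := w / τ^m with hc
    have hc0 : 0 < c := div_pos hw hτm
    have hcτ : c < τ := by
      rw [hc, div_lt_iff₀ hτm]
      rw [pow_succ] at hcase; linarith [hcase]
    -- piece 1
    have hI1 : ∫ x in (0:ℝ)..c, Gz τ m (w / x) = w := by
      have key : ∀ x ∈ Set.Ioo (0:ℝ) c, Gz τ m (w / x) = τ ^ m := by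
        intro x hx
        have h1 : τ ^ m < w / x := by
          rw [lt_div_iff₀ hx.1]
          have := hx.2
          rw [hc, lt_div_iff₀ hτm] at this
          linarith
        rw [Gz, if_neg (not_le.2 h1)]
      have hae_ne' : ∀ᵐ x : ℝ, x ∉ ({c} : Set ℝ) :=
        measure_eq_zero_iff_ae_notMem.mp Real.volume_singleton
      have hconst : ∫ x in (0:ℝ)..c, Gz τ m (w / x) = ∫ _x in (0:ℝ)..c, (τ^m : ℝ) := by
        apply intervalIntegral.integral_congr_ae
        filter_upwards [hae_ne'] with x hx hmem
        rw [Set.uIoc_of_le hc0.le] at hmem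
        exact key x ⟨hmem.1, lt_of_le_of_ne hmem.2 (by simpa using hx)⟩
      rw [hconst, intervalIntegral.integral_const, smul_eq_mul, sub_zero, hc]
      field_simp
    -- piece 2 via FTC
    set a : ℝ := (m:ℝ) * Real.log τ - Real.log w with ha
    set D : ℝ → ℝ := fun y => (w/y) * ∑ s ∈ Finset.range m,
        (a + Real.log y)^s / (Nat.factorial s : ℝ) with hD
    set A : ℝ → ℝ := fun y => w * ∑ s ∈ Finset.range m,
        (a + Real.log y)^(s+1) / (Nat.factorial (s+1) : ℝ) with hA
    have huIcc : Set.uIcc c τ = Set.Icc c τ := Set.uIcc_of_le hcτ.le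
    have hpos : ∀ x ∈ Set.uIcc c τ, 0 < x := by
      rw [huIcc]; exact fun x hx => lt_of_lt_of_le hc0 hx.1
    have hderiv : ∀ x ∈ Set.uIcc c τ, HasDerivAt A (D x) x := by
      intro x hx
      have hx0 := hpos x hx
      have h := HasDerivAt.const_mul w (HasDerivAt.fun_sum (fun s (_ : s ∈ Finset.range m) =>
        (((Real.hasDerivAt_log hx0.ne').const_add a).pow (s+1)).div_const
          (Nat.factorial (s+1) : ℝ)))
      refine h.congr_deriv ?_
      symm
      rw [hD]
      simp only [Nat.add_sub_cancel]
      rw [Finset.mul_sum, Finset.mul_sum]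
      refine Finset.sum_congr rfl (fun s _ => ?_)
      have hs : (Nat.factorial s : ℝ) ≠ 0 := Nat.cast_ne_zero.mpr s.factorial_ne_zero
      have hx' : x ≠ 0 := hx0.ne'
      rw [Nat.factorial_succ]
      push_cast
      field_simp
    have hDcont : ContinuousOn D (Set.uIcc c τ) := by
      apply ContinuousOn.mul
      · exact continuousOn_const.div continuousOn_id (fun x hx => (hpos x hx).ne')
      · apply continuousOn_finset_sum
        intro s _
        exact ((continuousOn_const.add (Real.continuousOn_log.mono
          (fun x hx => Set.mem_compl_singleton_iff.mpr (hpos x hx).ne'))).pow _).div_const _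
    have hEq : Set.EqOn (fun x => Gz τ m (w / x)) D (Set.uIcc c τ) := by
      intro x hx
      have hx0 := hpos x hx
      have hcx : c ≤ x := (huIcc ▸ hx).1
      have hb : w / x ≤ τ ^ m := by
        rw [div_le_iff₀ hx0]
        rw [hc, div_le_iff₀ hτm] at hcx
        linarith
      simp only [Gz, if_pos hb, hD]
      rw [Real.log_div hw.ne' hx0.ne']
      congr 1
      refine Finset.sum_congr rfl (fun s _ => ?_)
      congr 2
      rw [ha]; ring
    have hI2 : ∫ x in c..τ, Gz τ m (w / x) = A τ - A c := by
      rw [intervalIntegral.integral_congr hEq]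
      exact intervalIntegral.integral_eq_sub_of_hasDerivAt hderiv hDcont.intervalIntegrable
    have hAc : A c = 0 := by
      have : a + Real.log c = 0 := by
        rw [ha, hc, Real.log_div hw.ne' hτm.ne', Real.log_pow]; ring
      rw [hA]
      simp [this]
    have hsplit : (∫ x in (0:ℝ)..c, Gz τ m (w / x)) + ∫ x in c..τ, Gz τ m (w / x)
        = ∫ x in (0:ℝ)..τ, Gz τ m (w / x) := by
      apply intervalIntegral.integral_add_adjacent_intervals
      · exact (Gz_intInt τ m hτ0 hw).mono_set (by
          rw [Set.uIcc_of_le hc0.le, Set.uIcc_of_le hτ0.le]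
          exact Set.Icc_subset_Icc le_rfl hcτ.le)
      · exact (Gz_intInt τ m hτ0 hw).mono_set (by
          rw [Set.uIcc_of_le hcτ.le, Set.uIcc_of_le hτ0.le]
          exact Set.Icc_subset_Icc hc0.le le_rfl)
    rw [← hsplit, hI1, hI2, hAc, sub_zero]
    -- final algebra
    rw [Gz, if_pos hcase.le]
    rw [Finset.sum_range_succ']
    have hcast : ((m+1 : ℕ) : ℝ) * Real.log τ - Real.log w = a + Real.log τ := by
      rw [ha]; push_cast; ring
    simp only [hcast, pow_zero, Nat.factorial_zero, Nat.cast_one]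
    rw [hA]
    ring

lemma Gz_mono (τ : ℝ) (hτ0 : 0 < τ) (k : ℕ) {w₁ w₂ : ℝ} (h1 : 0 < w₁) (h12 : w₁ ≤ w₂) :
    Gz τ k w₁ ≤ Gz τ k w₂ := by
  induction k generalizing w₁ w₂ with
  | zero =>
    simp only [Gz, pow_zero, Finset.range_zero, Finset.sum_empty, mul_zero]
    split <;> split <;> simp_all <;> linarith
  | succ m ih =>
    have h2 : 0 < w₂ := lt_of_lt_of_le h1 h12
    rw [← Gz_int τ hτ0 m h1, ← Gz_int τ hτ0 m h2]
    apply intervalIntegral.integral_mono_on hτ0.le (Gz_intInt τ m hτ0 h1)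
      (Gz_intInt τ m hτ0 h2)
    intro x hx
    rcases eq_or_lt_of_le hx.1 with rfl | hx0
    · simp [div_zero]
    · exact ih (div_pos h1 hx0) (by gcongr)

noncomputable def Hz (τ : ℝ) (n : ℕ) (w : ℝ) : ℝ :=
  ∑ k ∈ Finset.range (n+1), (n.choose k : ℝ) * (1-τ)^(n-k) * Gz τ k w

lemma Hz_meas (τ : ℝ) (n : ℕ) : Measurable (Hz τ n) :=
  Finset.measurable_sum _ (fun k _ => (Gz_meas τ k).const_mul _)

lemma Hz_nonneg (τ : ℝ) (n : ℕ) {w : ℝ} (hτ0 : 0 < τ) (hτ1 : τ ≤ 1) (hw : 0 < w) :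
    0 ≤ Hz τ n w :=
  Finset.sum_nonneg fun k _ => mul_nonneg
    (mul_nonneg (Nat.cast_nonneg _) (pow_nonneg (by linarith) _)) (Gz_nonneg τ k hτ0 hw)

lemma Hz_le_one (τ : ℝ) (n : ℕ) {w : ℝ} (hτ0 : 0 < τ) (hτ1 : τ ≤ 1) (hw : 0 < w) :
    Hz τ n w ≤ 1 := by
  have : Hz τ n w ≤ ∑ k ∈ Finset.range (n+1), (n.choose k : ℝ) * (1-τ)^(n-k) * τ^k := by
    apply Finset.sum_le_sum
    intro k _
    exact mul_le_mul_of_nonneg_left (Gz_le_pow τ k hτ0 hw)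
      (mul_nonneg (Nat.cast_nonneg _) (pow_nonneg (by linarith) _))
  have hbin : ∑ k ∈ Finset.range (n+1), (n.choose k : ℝ) * (1-τ)^(n-k) * τ^k = 1 := by
    have h := add_pow τ (1-τ) n
    have h1 : τ + (1-τ) = 1 := by ring
    rw [h1, one_pow] at h
    exact (Finset.sum_congr rfl (fun k _ => by ring)).trans h.symm
  linarith [this, hbin.le]

lemma Hz_mono (τ : ℝ) (hτ0 : 0 < τ) (hτ1 : τ ≤ 1) (n : ℕ) {w₁ w₂ : ℝ}
    (h1 : 0 < w₁) (h12 : w₁ ≤ w₂) : Hz τ n w₁ ≤ Hz τ n w₂ :=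
  Finset.sum_le_sum fun k _ => mul_le_mul_of_nonneg_left (Gz_mono τ hτ0 k h1 h12)
    (mul_nonneg (Nat.cast_nonneg _) (pow_nonneg (by linarith) _))

lemma Hz_intInt (τ : ℝ) (n : ℕ) {w : ℝ} (hτ0 : 0 < τ) (hw : 0 < w) :
    IntervalIntegrable (fun x : ℝ => Hz τ n (w / x)) volume 0 τ := by
  rw [intervalIntegrable_iff_integrableOn_Ioc_of_le hτ0.le]
  unfold Hz
  apply integrable_finset_sum
  intro k _
  have h := Gz_intInt τ k hτ0 hw
  rw [intervalIntegrable_iff_integrableOn_Ioc_of_le hτ0.le] at h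
  exact h.const_mul _

lemma Hz_rec (τ : ℝ) (hτ0 : 0 < τ) (n : ℕ) {w : ℝ} (hw : 0 < w) :
    Hz τ (n+1) w = (1-τ) * Hz τ n w + ∫ x in (0:ℝ)..τ, Hz τ n (w / x) := by
  have hswap : ∫ x in (0:ℝ)..τ, Hz τ n (w / x)
      = ∑ k ∈ Finset.range (n+1), (n.choose k : ℝ) * (1-τ)^(n-k) * Gz τ (k+1) w := by
    unfold Hz
    rw [intervalIntegral.integral_finset_sum (fun k _ => (Gz_intInt τ k hτ0 hw).const_mul _)]
    refine Finset.sum_congr rfl (fun k _ => ?_)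
    rw [intervalIntegral.integral_const_mul, Gz_int τ hτ0 k hw]
  rw [hswap]
  have step1 : Hz τ (n+1) w
      = ∑ k ∈ Finset.range (n+1), ((n+1).choose (k+1) : ℝ) * (1-τ)^(n-k) * Gz τ (k+1) w
        + (1-τ)^(n+1) * Gz τ 0 w := by
    unfold Hz
    rw [Finset.sum_range_succ']
    congr 1
    · refine Finset.sum_congr rfl (fun k hk => ?_)
      rw [Finset.mem_range] at hk
      have e1 : n+1-(k+1) = n - k := by omega
      rw [e1]
    · simp
  have step2 : ∑ k ∈ Finset.range (n+1), ((n+1).choose (k+1) : ℝ) * (1-τ)^(n-k) * Gz τ (k+1) w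
      = ∑ k ∈ Finset.range (n+1), (n.choose k : ℝ) * (1-τ)^(n-k) * Gz τ (k+1) w
        + ∑ k ∈ Finset.range (n+1), (n.choose (k+1) : ℝ) * (1-τ)^(n-k) * Gz τ (k+1) w := by
    rw [← Finset.sum_add_distrib]
    refine Finset.sum_congr rfl (fun k hk => ?_)
    rw [Nat.choose_succ_succ]
    push_cast
    ring
  have step3 : ∑ k ∈ Finset.range (n+1), (n.choose (k+1) : ℝ) * (1-τ)^(n-k) * Gz τ (k+1) w
        + (1-τ)^(n+1) * Gz τ 0 w = (1-τ) * Hz τ n w := by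
    have l1 : ∑ k ∈ Finset.range (n+1), (n.choose (k+1) : ℝ) * (1-τ)^(n-k) * Gz τ (k+1) w
        = ∑ k ∈ Finset.range n, (n.choose (k+1) : ℝ) * (1-τ)^(n-k) * Gz τ (k+1) w := by
      rw [Finset.sum_range_succ, Nat.choose_eq_zero_of_lt (by omega : n < n + 1)]
      norm_num
    have l2 : (1-τ) * Hz τ n w
        = ∑ k ∈ Finset.range (n+1), (1-τ) * ((n.choose k : ℝ) * (1-τ)^(n-k) * Gz τ k w) := by
      unfold Hz; rw [Finset.mul_sum]
    have l3 : ∑ k ∈ Finset.range (n+1), (1-τ) * ((n.choose k : ℝ) * (1-τ)^(n-k) * Gz τ k w)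
        = ∑ k ∈ Finset.range n, (1-τ) * ((n.choose (k+1) : ℝ) * (1-τ)^(n-(k+1)) * Gz τ (k+1) w)
          + (1-τ) * ((n.choose 0 : ℝ) * (1-τ)^(n-0) * Gz τ 0 w) :=
      Finset.sum_range_succ' (fun k => (1-τ) * ((n.choose k : ℝ) * (1-τ)^(n-k) * Gz τ k w)) n
    rw [l1, l2, l3]
    congr 1
    · refine Finset.sum_congr rfl (fun k hk => ?_)
      rw [Finset.mem_range] at hk
      have e2 : n - k = (n - (k+1)) + 1 := by omega
      rw [e2, pow_succ]
      ring
    · simp only [Nat.choose_zero_right, Nat.cast_one, Nat.sub_zero, pow_succ]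
      ring
  rw [step1, step2, add_assoc, step3]
  ring

lemma dominance (τ : ℝ) (hτ1 : τ ≤ 1) (μ : Measure ℝ) [IsProbabilityMeasure μ]
    (hμ : ∀ t ∈ Set.Icc (0:ℝ) 1, μ (Set.Iic t) ≤ ENNReal.ofReal t)
    (g : ℝ → ℝ) (hgm : Measurable g) (hg0 : ∀ x, 0 ≤ g x)
    (hsupp : ∀ x, g x ≠ 0 → x ∈ Set.Ioc 0 τ)
    (hmono : ∀ x y, 0 < y → y ≤ x → g x ≤ g y) :
    ∫⁻ x, ENNReal.ofReal (g x) ∂μ ≤ ∫⁻ x, ENNReal.ofReal (g x) := by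
  rw [lintegral_eq_lintegral_meas_le μ (Filter.Eventually.of_forall hg0) hgm.aemeasurable,
      lintegral_eq_lintegral_meas_le volume (Filter.Eventually.of_forall hg0) hgm.aemeasurable]
  apply lintegral_mono_ae
  filter_upwards [ae_restrict_mem measurableSet_Ioi] with t ht
  have hsub : {x : ℝ | t ≤ g x} ⊆ Set.Ioc 0 τ := by
    intro x hx
    exact hsupp x (by intro h0; rw [Set.mem_setOf_eq, h0] at hx; exact absurd (lt_of_lt_of_le ht hx) (lt_irrefl 0))
  by_cases hA : {x : ℝ | t ≤ g x} = ∅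
  · rw [hA]; simp
  · obtain ⟨x0, hx0⟩ := Set.nonempty_iff_ne_empty.mpr hA
    have hbdd : BddAbove {x : ℝ | t ≤ g x} := ⟨τ, fun x hx => (hsub hx).2⟩
    set a := sSup {x : ℝ | t ≤ g x} with ha
    have ha0 : 0 ≤ a := le_trans (hsub hx0).1.le (le_csSup hbdd hx0)
    have haτ : a ≤ τ := csSup_le ⟨x0, hx0⟩ (fun x hx => (hsub hx).2)
    calc μ {x : ℝ | t ≤ g x} ≤ μ (Set.Iic a) := measure_mono (fun x hx => le_csSup hbdd hx)
      _ ≤ ENNReal.ofReal a := hμ a ⟨ha0, le_trans haτ hτ1⟩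
      _ = volume (Set.Ioo 0 a) := by rw [Real.volume_Ioo, sub_zero]
      _ ≤ volume {x : ℝ | t ≤ g x} := by
          apply measure_mono
          intro y hy
          obtain ⟨x, hxA, hyx⟩ := exists_lt_of_lt_csSup ⟨x0, hx0⟩ hy.2
          exact le_trans hxA (hmono x y hy.1 hyx.le)

lemma main_bound (τ : ℝ) (hτ0 : 0 < τ) (hτ1 : τ ≤ 1)
    {Ω : Type*} [MeasurableSpace Ω] (P : Measure Ω) [IsProbabilityMeasure P]
    {L : ℕ} (X : Fin L → Ω → ℝ) (hXmeas : ∀ k, Measurable (X k))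
    (hXindep : iIndepFun X P)
    (hXvalid : ∀ k, ∀ t ∈ Set.Icc (0 : ℝ) 1, P {ω | X k ω ≤ t} ≤ ENNReal.ofReal t)
    (s : Finset (Fin L)) :
    ∀ w : ℝ, 0 < w →
      P {ω | (∏ k ∈ s, (if X k ω ≤ τ then X k ω else 1)) < w}
        ≤ ENNReal.ofReal (Hz τ s.card w) := by
  induction s using Finset.cons_induction with
  | empty =>
    intro w hw
    by_cases h1 : 1 < w
    · have hHz : Hz τ 0 w = 1 := by
        simp [Hz, Gz, not_le.mpr h1]
      calc P {ω | (∏ k ∈ (∅ : Finset (Fin L)), (if X k ω ≤ τ then X k ω else 1)) < w}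
          ≤ 1 := prob_le_one
        _ = ENNReal.ofReal (Hz τ 0 w) := by rw [hHz, ENNReal.ofReal_one]
    · have hempty : {ω : Ω | (∏ k ∈ (∅ : Finset (Fin L)), (if X k ω ≤ τ then X k ω else 1)) < w} = ∅ := by
        ext ω; simp [h1]
      rw [hempty]
      simp
  | cons a s' ha ih =>
    intro w hw
    set n := s'.card with hn
    set Z : Ω → ℝ := X a with hZdef
    set W' : Ω → ℝ := fun ω => ∏ k ∈ s', (if X k ω ≤ τ then X k ω else 1) with hWdef
    have hWmeas : Measurable W' := by
      apply Finset.measurable_prod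
      intro k _
      exact Measurable.ite (measurableSet_le (hXmeas k) measurable_const) (hXmeas k)
        measurable_const
    have hZmeas : Measurable Z := hXmeas a
    -- independence
    have hindep : IndepFun Z W' P := by
      have h := hXindep.indepFun_finset {a} s' (Finset.disjoint_singleton_left.mpr ha) hXmeas
      have hφ : Measurable (fun v : (({a} : Finset (Fin L)) : Type _) → ℝ =>
          v ⟨a, Finset.mem_singleton_self a⟩) := measurable_pi_apply _
      have hψ : Measurable (fun v : ((s' : Finset (Fin L)) : Type _) → ℝ =>
          ∏ k ∈ s'.attach, (if v k ≤ τ then v k else 1)) := by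
        apply Finset.measurable_prod
        intro k _
        exact Measurable.ite (measurableSet_le (measurable_pi_apply k) measurable_const)
          (measurable_pi_apply k) measurable_const
      have h2 := h.comp hφ hψ
      have e1 : ((fun v : (({a} : Finset (Fin L)) : Type _) → ℝ =>
          v ⟨a, Finset.mem_singleton_self a⟩) ∘ (fun ω (i : ({a} : Finset (Fin L))) => X i ω)) = Z := rfl
      have e2 : ((fun v : ((s' : Finset (Fin L)) : Type _) → ℝ =>
          ∏ k ∈ s'.attach, (if v k ≤ τ then v k else 1)) ∘ (fun ω (i : (s' : Finset (Fin L))) => X i ω)) = W' := by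
        funext ω
        simp only [Function.comp_apply, hWdef]
        rw [← Finset.prod_attach s' (fun k => (if X k ω ≤ τ then X k ω else 1))]
      rwa [e1, e2] at h2
    set μ := P.map Z with hμdef
    set ν := P.map W' with hνdef
    haveI : IsProbabilityMeasure μ := Measure.isProbabilityMeasure_map hZmeas.aemeasurable
    haveI : IsProbabilityMeasure ν := Measure.isProbabilityMeasure_map hWmeas.aemeasurable
    have hpair : P.map (fun ω => (Z ω, W' ω)) = μ.prod ν :=
      (indepFun_iff_map_prod_eq_prod_map_map hZmeas.aemeasurable hWmeas.aemeasurable).mp hindep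
    have hμIic : ∀ t ∈ Set.Icc (0:ℝ) 1, μ (Set.Iic t) ≤ ENNReal.ofReal t := by
      intro t ht
      rw [hμdef, Measure.map_apply hZmeas measurableSet_Iic]
      exact hXvalid a t ht
    have hν_lt : ∀ u : ℝ, 0 < u → ν (Set.Iio u) ≤ ENNReal.ofReal (Hz τ n u) := by
      intro u hu
      rw [hνdef, Measure.map_apply hWmeas measurableSet_Iio]
      exact ih u hu
    -- sets
    set B₁ : Set (ℝ × ℝ) := Set.Ioi τ ×ˢ Set.Iio w with hB₁def
    set B₂ : Set (ℝ × ℝ) := {p : ℝ × ℝ | p.1 ∈ Set.Ioc 0 τ ∧ p.2 * p.1 < w} with hB₂def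
    have hB₁ : MeasurableSet B₁ := measurableSet_Ioi.prod measurableSet_Iio
    have hB₂ : MeasurableSet B₂ := by
      apply MeasurableSet.inter
      · exact measurable_fst measurableSet_Ioc
      · exact (measurable_snd.mul measurable_fst) measurableSet_Iio
    -- decomposition
    have hEsub : {ω | (∏ k ∈ Finset.cons a s' ha, (if X k ω ≤ τ then X k ω else 1)) < w}
        ⊆ ((fun ω => (Z ω, W' ω)) ⁻¹' B₁) ∪
          (((fun ω => (Z ω, W' ω)) ⁻¹' B₂) ∪ {ω | Z ω ≤ 0}) := by
      intro ω hω
      rw [Set.mem_setOf_eq, Finset.prod_cons] at hω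
      by_cases hτZ : τ < Z ω
      · left
        refine ⟨hτZ, ?_⟩
        rw [if_neg (not_le.mpr hτZ), one_mul] at hω
        exact hω
      · push_neg at hτZ
        by_cases hZ0 : Z ω ≤ 0
        · right; right; exact hZ0
        · push_neg at hZ0
          right; left
          refine ⟨⟨hZ0, hτZ⟩, ?_⟩
          rw [if_pos hτZ] at hω
          rw [mul_comm]
          exact hω
    have hbound : P {ω | (∏ k ∈ Finset.cons a s' ha, (if X k ω ≤ τ then X k ω else 1)) < w}
        ≤ P ((fun ω => (Z ω, W' ω)) ⁻¹' B₁) + (P ((fun ω => (Z ω, W' ω)) ⁻¹' B₂) + P {ω | Z ω ≤ 0}) :=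
      le_trans (measure_mono hEsub)
        (le_trans (measure_union_le _ _) (add_le_add_right (measure_union_le _ _) _))
    -- term N
    have hN : P {ω | Z ω ≤ 0} = 0 := by
      have := hXvalid a 0 ⟨le_rfl, zero_le_one⟩
      simpa using this
    -- term 1
    have hmap : ∀ B : Set (ℝ × ℝ), MeasurableSet B →
        P ((fun ω => (Z ω, W' ω)) ⁻¹' B) = (μ.prod ν) B := by
      intro B hB
      rw [← hpair, Measure.map_apply (hZmeas.prodMk hWmeas) hB]
    have hT1 : P ((fun ω => (Z ω, W' ω)) ⁻¹' B₁) ≤ μ (Set.Ioi τ) * ENNReal.ofReal (Hz τ n w) := by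
      rw [hmap B₁ hB₁, hB₁def, Measure.prod_prod]
      exact mul_le_mul_right (hν_lt w hw) _
    -- the function g for the dominance argument
    set g : ℝ → ℝ := Set.indicator (Set.Ioc 0 τ) (fun x => Hz τ n (w/x) - Hz τ n w) with hgdef
    have hgm : Measurable g :=
      (((Hz_meas τ n).comp (measurable_const.div measurable_id)).sub measurable_const).indicator
        measurableSet_Ioc
    have hg_inner_nonneg : ∀ x ∈ Set.Ioc 0 τ, 0 ≤ Hz τ n (w/x) - Hz τ n w := by
      intro x hx
      have hwx : w ≤ w / x := by
        rw [le_div_iff₀ hx.1]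
        exact mul_le_of_le_one_right hw.le (le_trans hx.2 hτ1)
      linarith [Hz_mono τ hτ0 hτ1 n hw hwx]
    have hg0 : ∀ x, 0 ≤ g x := by
      intro x
      rw [hgdef]
      by_cases hx : x ∈ Set.Ioc 0 τ
      · rw [Set.indicator_of_mem hx]; exact hg_inner_nonneg x hx
      · rw [Set.indicator_of_notMem hx]
    have hsupp : ∀ x, g x ≠ 0 → x ∈ Set.Ioc 0 τ := fun x hx => by
      by_contra h; exact hx (by rw [hgdef]; exact Set.indicator_of_notMem h _)
    have hgmono : ∀ x y, 0 < y → y ≤ x → g x ≤ g y := by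
      intro x y hy hyx
      by_cases hx : x ∈ Set.Ioc 0 τ
      · have hymem : y ∈ Set.Ioc 0 τ := ⟨hy, le_trans hyx hx.2⟩
        rw [hgdef, Set.indicator_of_mem hx, Set.indicator_of_mem hymem]
        have hdiv : w / x ≤ w / y := by gcongr
        have := Hz_mono τ hτ0 hτ1 n (div_pos hw hx.1) hdiv
        linarith
      · rw [hgdef, Set.indicator_of_notMem hx]
        exact hg0 y
    -- term 2
    have hT2 : P ((fun ω => (Z ω, W' ω)) ⁻¹' B₂)
        ≤ ENNReal.ofReal (Hz τ n w) * μ (Set.Ioc 0 τ) + ∫⁻ x, ENNReal.ofReal (g x) ∂μ := by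
      rw [hmap B₂ hB₂, Measure.prod_apply hB₂]
      have hpt : ∀ x : ℝ, ν (Prod.mk x ⁻¹' B₂)
          ≤ (Set.Ioc 0 τ).indicator (fun _ => ENNReal.ofReal (Hz τ n w)) x
            + ENNReal.ofReal (g x) := by
        intro x
        by_cases hx : x ∈ Set.Ioc 0 τ
        · have hpre : Prod.mk x ⁻¹' B₂ = Set.Iio (w / x) := by
            ext y
            simp only [hB₂def, Set.mem_preimage, Set.mem_setOf_eq, Set.mem_Iio]
            constructor
            · rintro ⟨_, hyx⟩; exact (lt_div_iff₀ hx.1).mpr hyx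
            · intro hy; exact ⟨hx, (lt_div_iff₀ hx.1).mp hy⟩
          rw [hpre, Set.indicator_of_mem hx]
          refine le_trans (hν_lt (w/x) (div_pos hw hx.1)) ?_
          have hgx : g x = Hz τ n (w/x) - Hz τ n w := by
            rw [hgdef]; exact Set.indicator_of_mem hx _
          rw [hgx]
          calc ENNReal.ofReal (Hz τ n (w/x))
              = ENNReal.ofReal (Hz τ n w + (Hz τ n (w/x) - Hz τ n w)) := by ring_nf
            _ ≤ _ := ENNReal.ofReal_add_le
        · have hpre : Prod.mk x ⁻¹' B₂ = ∅ := by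
            ext y
            simp only [hB₂def, Set.mem_preimage, Set.mem_setOf_eq, Set.mem_empty_iff_false,
              iff_false, not_and]
            intro h1; exact absurd h1 hx
          rw [hpre, Set.indicator_of_notMem hx, measure_empty, zero_add]
          exact zero_le
      refine le_trans (lintegral_mono hpt) ?_
      rw [lintegral_add_left (measurable_const.indicator measurableSet_Ioc),
        lintegral_indicator_const measurableSet_Ioc]
    -- dominance and Lebesgue computation
    have hdom := dominance τ hτ1 μ hμIic g hgm hg0 hsupp hgmono
    have h1 := Hz_intInt τ n hτ0 hw
    rw [intervalIntegrable_iff_integrableOn_Ioc_of_le hτ0.le] at h1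
    have hgint : Integrable g volume := (integrable_indicator_iff measurableSet_Ioc).mpr
      (h1.sub (integrableOn_const measure_Ioc_lt_top.ne))
    have hIg : ∫ x, g x = (∫ x in (0:ℝ)..τ, Hz τ n (w/x)) - τ * Hz τ n w := by
      rw [hgdef, integral_indicator measurableSet_Ioc,
        integral_sub h1 (integrableOn_const measure_Ioc_lt_top.ne)]
      congr 1
      · rw [intervalIntegral.integral_of_le hτ0.le]
      · rw [setIntegral_const, Real.volume_real_Ioc_of_le hτ0.le, sub_zero, smul_eq_mul]
    have hIg_nonneg : 0 ≤ (∫ x in (0:ℝ)..τ, Hz τ n (w/x)) - τ * Hz τ n w := by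
      rw [← hIg]; exact integral_nonneg hg0
    have hlebeq : (∫⁻ x, ENNReal.ofReal (g x))
        = ENNReal.ofReal ((∫ x in (0:ℝ)..τ, Hz τ n (w/x)) - τ * Hz τ n w) := by
      rw [← ofReal_integral_eq_lintegral_ofReal hgint (Filter.Eventually.of_forall hg0), hIg]
    -- measure split
    have hμsplit : μ (Set.Ioi τ) + μ (Set.Ioc 0 τ) ≤ 1 := by
      rw [add_comm, ← measure_union (Set.Ioc_disjoint_Ioi le_rfl) measurableSet_Ioi,
        Set.Ioc_union_Ioi_eq_Ioi hτ0.le]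
      exact prob_le_one
    -- assembly
    have hcard : (Finset.cons a s' ha).card = n + 1 := by rw [Finset.card_cons, hn]
    rw [hcard]
    calc P {ω | (∏ k ∈ Finset.cons a s' ha, (if X k ω ≤ τ then X k ω else 1)) < w}
        ≤ P ((fun ω => (Z ω, W' ω)) ⁻¹' B₁) + (P ((fun ω => (Z ω, W' ω)) ⁻¹' B₂)
            + P {ω | Z ω ≤ 0}) := hbound
      _ ≤ μ (Set.Ioi τ) * ENNReal.ofReal (Hz τ n w)
          + ((ENNReal.ofReal (Hz τ n w) * μ (Set.Ioc 0 τ) + ∫⁻ x, ENNReal.ofReal (g x) ∂μ)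
            + 0) := by
          exact add_le_add hT1 (add_le_add hT2 (le_of_eq hN))
      _ = (μ (Set.Ioi τ) + μ (Set.Ioc 0 τ)) * ENNReal.ofReal (Hz τ n w)
          + ∫⁻ x, ENNReal.ofReal (g x) ∂μ := by
          rw [add_zero, add_mul, mul_comm (ENNReal.ofReal (Hz τ n w)) (μ (Set.Ioc 0 τ))]
          ring
      _ ≤ 1 * ENNReal.ofReal (Hz τ n w) + ∫⁻ x, ENNReal.ofReal (g x) := by
          exact add_le_add (mul_le_mul_left hμsplit _) hdom
      _ = ENNReal.ofReal (Hz τ n w)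
          + ENNReal.ofReal ((∫ x in (0:ℝ)..τ, Hz τ n (w/x)) - τ * Hz τ n w) := by
          rw [one_mul, hlebeq]
      _ = ENNReal.ofReal (Hz τ (n+1) w) := by
          rw [← ENNReal.ofReal_add (Hz_nonneg τ n hτ0 hτ1 hw) hIg_nonneg,
            Hz_rec τ hτ0 n hw]
          congr 1
          ring

/-- Validity of Zaykin's truncated product of P-values: for independent
P-values that are stochastically larger than Uniform[0,1], the distribution of
the truncated product is bounded by the right-hand side of equation (6). -/
theorem truncated_product_valid
    (L : ℕ) (hL : 1 ≤ L) (τ : ℝ) (hτ0 : 0 < τ) (hτ1 : τ ≤ 1)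
    (Ω : Type*) [MeasurableSpace Ω] (P : Measure Ω) [IsProbabilityMeasure P]
    (X : Fin L → Ω → ℝ) (hXmeas : ∀ k, Measurable (X k))
    (hXindep : iIndepFun X P)
    (hXrange : ∀ k ω, X k ω ∈ Set.Icc (0 : ℝ) 1)
    (hXvalid : ∀ k, ∀ t ∈ Set.Icc (0 : ℝ) 1, P {ω | X k ω ≤ t} ≤ ENNReal.ofReal t)
    (w : ℝ) (hw0 : 0 < w) (hw1 : w ≤ 1) :
    P {ω | (∏ k ∈ Finset.univ.filter (fun k => X k ω ≤ τ), X k ω) < w} ≤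
      ENNReal.ofReal (∑ k ∈ Finset.Icc 1 L,
        (Nat.choose L k : ℝ) * (1 - τ) ^ (L - k) *
          ((if w ≤ τ ^ k then (1 : ℝ) else 0) * w *
              (∑ s ∈ Finset.range k,
                (k * Real.log τ - Real.log w) ^ s / (Nat.factorial s : ℝ)) +
            (if τ ^ k < w then (1 : ℝ) else 0) * τ ^ k)) := by
  have hmain := main_bound τ hτ0 hτ1 P X hXmeas hXindep hXvalid Finset.univ w hw0
  have hset : {ω | (∏ k ∈ Finset.univ.filter (fun k => X k ω ≤ τ), X k ω) < w}
      = {ω | (∏ k ∈ (Finset.univ : Finset (Fin L)), (if X k ω ≤ τ then X k ω else 1)) < w} := by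
    ext ω
    rw [Set.mem_setOf_eq, Set.mem_setOf_eq, Finset.prod_filter]
  rw [hset]
  refine le_trans hmain (le_of_eq ?_)
  congr 1
  rw [Finset.card_univ, Fintype.card_fin]
  unfold Hz
  have hins : Finset.range (L+1) = insert 0 (Finset.Icc 1 L) := by
    ext k
    simp only [Finset.mem_range, Finset.mem_insert, Finset.mem_Icc]
    omega
  rw [hins, Finset.sum_insert (by simp)]
  have hG0 : Gz τ 0 w = 0 := by simp [Gz, hw1]
  rw [hG0, mul_zero, zero_add]
  refine Finset.sum_congr rfl (fun k hk => ?_)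
  congr 1
  rw [Gz]
  by_cases h : w ≤ τ ^ k
  · rw [if_pos h, if_pos h, if_neg (not_lt.mpr h)]; ring
  · rw [if_neg h, if_neg h, if_pos (not_le.mp h)]; ring
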